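/- Let d ≥ 5 be an integer. In ℂ[t₀,t₁,t₂,t₃], let h be homogeneous of degree d−4 involving only t₀,t₁, let G be homogeneous of degree d−1 involving only t₀,t₁,t₂, and let H be homogeneous of degree d−1. Set f = (t₀t₁)²·h + t₂·G + t₃·H. Assume that the four partial derivatives of f do not all vanish at the point (1,0,0,0), and do not all vanish at the point (0,1,0,0). Let Ḡ, H̄ ∈ ℂ[t₀,t₁] be the homogeneous degree-(d−1) polynomials obtained from G and H by substituting t₂ = t₃ = 0. Then t₀t₁·V_{d−2} + span_ℂ{t₀Ḡ, t₁Ḡ, t₀H̄, t₁H̄} = V_d. -/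

import Mathlib

open MvPolynomial

noncomputable section

/-- `V n` is the space of homogeneous polynomials of degree `n` in `ℂ[t₀,t₁]`. -/
abbrev V (n : ℕ) : Submodule ℂ (MvPolynomial (Fin 2) ℂ) :=
  MvPolynomial.homogeneousSubmodule (Fin 2) ℂ n

lemma key (n : ℕ) (hn : 2 ≤ n) (p : MvPolynomial (Fin 2) ℂ) (hp : p ∈ V n) :
    p - (eval ![1,0] p) • (X 0 : MvPolynomial (Fin 2) ℂ) ^ n - (eval ![0,1] p) • X 1 ^ n
      ∈ (V (n-2)).map (LinearMap.mulLeft ℂ (X 0 * X 1 : MvPolynomial (Fin 2) ℂ)) := by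
  set K := (V (n-2)).map (LinearMap.mulLeft ℂ (X 0 * X 1 : MvPolynomial (Fin 2) ℂ)) with hK
  set L : MvPolynomial (Fin 2) ℂ →ₗ[ℂ] MvPolynomial (Fin 2) ℂ :=
    LinearMap.id - ((aeval (![1,0] : Fin 2 → ℂ)).toLinearMap.smulRight ((X 0 : MvPolynomial (Fin 2) ℂ) ^ n))
      - ((aeval (![0,1] : Fin 2 → ℂ)).toLinearMap.smulRight ((X 1 : MvPolynomial (Fin 2) ℂ) ^ n)) with hL
  have haev : ∀ (v : Fin 2 → ℂ) q, aeval v q = eval v q := fun v q => rfl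
  have hLp : ∀ q, L q = q - (eval ![1,0] q) • (X 0 : MvPolynomial (Fin 2) ℂ) ^ n
      - (eval ![0,1] q) • X 1 ^ n := by
    intro q
    simp [hL, haev]
  rw [← hLp]
  have hsum : L p = ∑ m ∈ p.support, L (monomial m (coeff m p)) := by
    conv_lhs => rw [as_sum p]
    rw [map_sum]
  rw [hsum]
  apply Submodule.sum_mem
  intro m hmem
  have hdeg : m 0 + m 1 = n := by
    have h1 := hp (MvPolynomial.mem_support_iff.mp hmem)
    rw [show (Finsupp.weight (1 : Fin 2 → ℕ)) = Finsupp.weight (fun _ => 1) from rfl,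
      ← Finsupp.degree_eq_weight_one] at h1
    rw [← h1, Finsupp.degree_apply,
      Finset.sum_subset (Finset.subset_univ m.support)
        (by intro x _ hx; simpa using (Finsupp.notMem_support_iff.mp hx))]
    simp [Fin.sum_univ_two]
  set c := coeff m p with hc
  rw [hLp]
  have hev : ∀ x y : ℂ, eval ![x, y] (monomial m c) = c * (x ^ m 0 * y ^ m 1) := by
    intro x y
    rw [eval_monomial, Finsupp.prod,
      Finset.prod_subset (Finset.subset_univ m.support)
        (fun i _ hi => by rw [Finsupp.notMem_support_iff.mp hi, pow_zero]),
      Fin.prod_univ_two]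
    simp
  have hdegree : ∀ (m' : Fin 2 →₀ ℕ), m'.degree = m' 0 + m' 1 := by
    intro m'
    rw [Finsupp.degree_apply, Finset.sum_subset (Finset.subset_univ m'.support)
      (by intro x _ hx; simpa using (Finsupp.notMem_support_iff.mp hx))]
    simp [Fin.sum_univ_two]
  rcases Nat.eq_zero_or_pos (m 0) with h0 | h0
  · have hm1 : m 1 = n := by omega
    have hm : m = Finsupp.single 1 n := by
      ext i; fin_cases i <;> simp [h0, hm1, Finsupp.single_apply]
    have hz : (monomial m) c - (eval ![1,0]) ((monomial m) c) • (X 0 : MvPolynomial (Fin 2) ℂ) ^ n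
        - (eval ![0,1]) ((monomial m) c) • X 1 ^ n = 0 := by
      rw [hev, hev, h0, hm1, hm, X_pow_eq_monomial, X_pow_eq_monomial,
        smul_monomial, smul_monomial]
      simp [zero_pow (show n ≠ 0 by omega)]
    rw [hz]
    exact K.zero_mem
  rcases Nat.eq_zero_or_pos (m 1) with h1 | h1
  · have hm0 : m 0 = n := by omega
    have hm : m = Finsupp.single 0 n := by
      ext i; fin_cases i <;> simp [h1, hm0, Finsupp.single_apply]
    have hz : (monomial m) c - (eval ![1,0]) ((monomial m) c) • (X 0 : MvPolynomial (Fin 2) ℂ) ^ n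
        - (eval ![0,1]) ((monomial m) c) • X 1 ^ n = 0 := by
      rw [hev, hev, h1, hm0, hm, X_pow_eq_monomial, X_pow_eq_monomial,
        smul_monomial, smul_monomial]
      simp [zero_pow (show n ≠ 0 by omega)]
    rw [hz]
    exact K.zero_mem
  · obtain ⟨k, hk⟩ : ∃ k, m 0 = k + 1 := ⟨m 0 - 1, by omega⟩
    obtain ⟨l, hl⟩ : ∃ l, m 1 = l + 1 := ⟨m 1 - 1, by omega⟩
    have hz : (monomial m) c - (eval ![1,0]) ((monomial m) c) • (X 0 : MvPolynomial (Fin 2) ℂ) ^ n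
        - (eval ![0,1]) ((monomial m) c) • X 1 ^ n = monomial m c := by
      rw [hev, hev]
      rw [show ((1:ℂ)^ m 0 * (0:ℂ)^ m 1) = 0 by simp [zero_pow (by omega : m 1 ≠ 0)],
        show ((0:ℂ)^ m 0 * (1:ℂ)^ m 1) = 0 by simp [zero_pow (by omega : m 0 ≠ 0)]]
      simp
    rw [hz]
    refine ⟨monomial (Finsupp.single 0 k + Finsupp.single 1 l) c, ?_, ?_⟩
    · apply isHomogeneous_monomial
      rw [hdegree]
      simp [Finsupp.single_apply]
      omega
    · rw [LinearMap.mulLeft_apply]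
      have hmeq : m = (Finsupp.single 0 1 + Finsupp.single 1 1)
          + (Finsupp.single 0 k + Finsupp.single 1 l) := by
        ext i; fin_cases i <;> simp [Finsupp.single_apply, hk, hl] <;> omega
      rw [show ((X 0 : MvPolynomial (Fin 2) ℂ) * X 1)
          = monomial (Finsupp.single 0 1 + Finsupp.single 1 1) 1 by
        rw [X, X, monomial_mul, one_mul]]
      rw [monomial_mul, one_mul, ← hmeq]

lemma bar_homog (n : ℕ) (G : MvPolynomial (Fin 4) ℂ) (hG : G.IsHomogeneous n) :
    (aeval ![X 0, X 1, 0, 0] G : MvPolynomial (Fin 2) ℂ).IsHomogeneous n := by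
  have hg : ∀ i : Fin 4,
      ((![X 0, X 1, 0, 0] : Fin 4 → MvPolynomial (Fin 2) ℂ) i).IsHomogeneous 1 := by
    intro i
    have h0 : ∀ j : Fin 2, (X j : MvPolynomial (Fin 2) ℂ).IsHomogeneous 1 :=
      fun j => isHomogeneous_X _ _
    have hz : (0 : MvPolynomial (Fin 2) ℂ).IsHomogeneous 1 :=
      (homogeneousSubmodule (Fin 2) ℂ 1).zero_mem
    fin_cases i <;> simpa using (by first | exact h0 0 | exact h0 1 | exact hz :
      (_ : Prop))
  have := hG.aeval ![X 0, X 1, 0, 0] hg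
  simpa using this

lemma eval_bar (G : MvPolynomial (Fin 4) ℂ) (x y : ℂ) :
    eval ![x,y] (aeval ![X 0, X 1, 0, 0] G) = eval ![x,y,0,0] G := by
  rw [show (eval ![x,y] : MvPolynomial (Fin 2) ℂ → ℂ) (aeval ![X 0, X 1, 0, 0] G)
      = aeval ![x,y] (aeval ![X 0, X 1, 0, 0] G) from rfl,
    comp_aeval_apply]
  rw [show (fun i => aeval (R := ℂ) ![x,y] (![X 0, X 1, 0, 0] i)) = ![x,y,0,0] by
    funext i; fin_cases i <;> simp]
  rfl

lemma gen0 (d : ℕ) (hd : 2 ≤ d) (B : MvPolynomial (Fin 2) ℂ)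
    (hB : (X 0 * B : MvPolynomial (Fin 2) ℂ) ∈ V d)
    (ha : eval ![1,0] B ≠ 0) (T : Submodule ℂ (MvPolynomial (Fin 2) ℂ))
    (hXB : X 0 * B ∈ T)
    (hK : (V (d-2)).map (LinearMap.mulLeft ℂ (X 0 * X 1 : MvPolynomial (Fin 2) ℂ)) ≤ T) :
    (X 0 : MvPolynomial (Fin 2) ℂ) ^ d ∈ T := by
  have hk := key d hd _ hB
  have he1 : eval ![1,0] (X 0 * B : MvPolynomial (Fin 2) ℂ) = eval ![1,0] B := by simp
  have he2 : eval ![0,1] (X 0 * B : MvPolynomial (Fin 2) ℂ) = 0 := by simp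
  rw [he1, he2, zero_smul, sub_zero] at hk
  have hx : (X 0 : MvPolynomial (Fin 2) ℂ) ^ d
      = (eval ![1,0] B)⁻¹ • ((X 0 * B) - (X 0 * B - (eval ![1,0] B) • X 0 ^ d)) := by
    rw [sub_sub_cancel, smul_smul, inv_mul_cancel₀ ha, one_smul]
  rw [hx]
  exact T.smul_mem _ (T.sub_mem hXB (hK hk))

lemma gen1 (d : ℕ) (hd : 2 ≤ d) (B : MvPolynomial (Fin 2) ℂ)
    (hB : (X 1 * B : MvPolynomial (Fin 2) ℂ) ∈ V d)
    (ha : eval ![0,1] B ≠ 0) (T : Submodule ℂ (MvPolynomial (Fin 2) ℂ))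
    (hXB : X 1 * B ∈ T)
    (hK : (V (d-2)).map (LinearMap.mulLeft ℂ (X 0 * X 1 : MvPolynomial (Fin 2) ℂ)) ≤ T) :
    (X 1 : MvPolynomial (Fin 2) ℂ) ^ d ∈ T := by
  have hk := key d hd _ hB
  have he1 : eval ![0,1] (X 1 * B : MvPolynomial (Fin 2) ℂ) = eval ![0,1] B := by simp
  have he2 : eval ![1,0] (X 1 * B : MvPolynomial (Fin 2) ℂ) = 0 := by simp
  rw [he1, he2, zero_smul, sub_zero] at hk
  have hx : (X 1 : MvPolynomial (Fin 2) ℂ) ^ d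
      = (eval ![0,1] B)⁻¹ • ((X 1 * B) - (X 1 * B - (eval ![0,1] B) • X 1 ^ d)) := by
    rw [sub_sub_cancel, smul_smul, inv_mul_cancel₀ ha, one_smul]
  rw [hx]
  exact T.smul_mem _ (T.sub_mem hXB (hK hk))

/-- Case 1 of Theorem 3.3: if `f = (t₀t₁)²h + t₂G + t₃H` has nonvanishing gradient at
both `(1,0,0,0)` and `(0,1,0,0)`, then `t₀t₁·V_{d-2} + <t₀Ḡ, t₁Ḡ, t₀H̄, t₁H̄> = V_d`,
where `Ḡ`, `H̄` are obtained from `G`, `H` by setting `t₂ = t₃ = 0`. -/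
theorem statement5 (d : ℕ) (hd : 5 ≤ d)
    (h G H f : MvPolynomial (Fin 4) ℂ)
    (hhdeg : h.IsHomogeneous (d - 4))
    (hhsupp : h ∈ MvPolynomial.supported ℂ ({0, 1} : Set (Fin 4)))
    (hGdeg : G.IsHomogeneous (d - 1))
    (hGsupp : G ∈ MvPolynomial.supported ℂ ({0, 1, 2} : Set (Fin 4)))
    (hHdeg : H.IsHomogeneous (d - 1))
    (hf : f = (X 0 * X 1) ^ 2 * h + X 2 * G + X 3 * H)
    (hsm1 : ¬ ∀ i : Fin 4, MvPolynomial.eval ![1, 0, 0, 0] (pderiv i f) = 0)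
    (hsm2 : ¬ ∀ i : Fin 4, MvPolynomial.eval ![0, 1, 0, 0] (pderiv i f) = 0)
    (Gbar Hbar : MvPolynomial (Fin 2) ℂ)
    (hGbar : Gbar = MvPolynomial.aeval ![X 0, X 1, 0, 0] G)
    (hHbar : Hbar = MvPolynomial.aeval ![X 0, X 1, 0, 0] H) :
    (V (d - 2)).map (LinearMap.mulLeft ℂ (X 0 * X 1 : MvPolynomial (Fin 2) ℂ)) ⊔
        Submodule.span ℂ {X 0 * Gbar, X 1 * Gbar, X 0 * Hbar, X 1 * Hbar} = V d := by
  subst hf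
  -- smoothness extraction at the two points
  have hpt1 : eval ![1,0,0,0] G ≠ 0 ∨ eval ![1,0,0,0] H ≠ 0 := by
    push_neg at hsm1
    obtain ⟨i, hi⟩ := hsm1
    fin_cases i
    · exfalso; apply hi; simp [pderiv_mul, pow_two]
    · exfalso; apply hi; simp [pderiv_mul, pow_two]
    · left; intro hc; apply hi; simp [pderiv_mul, pow_two, hc]
    · right; intro hc; apply hi; simp [pderiv_mul, pow_two, hc]
  have hpt2 : eval ![0,1,0,0] G ≠ 0 ∨ eval ![0,1,0,0] H ≠ 0 := by
    push_neg at hsm2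
    obtain ⟨i, hi⟩ := hsm2
    fin_cases i
    · exfalso; apply hi; simp [pderiv_mul, pow_two]
    · exfalso; apply hi; simp [pderiv_mul, pow_two]
    · left; intro hc; apply hi; simp [pderiv_mul, pow_two, hc]
    · right; intro hc; apply hi; simp [pderiv_mul, pow_two, hc]
  have hGbh : Gbar.IsHomogeneous (d - 1) := by rw [hGbar]; exact bar_homog _ G hGdeg
  have hHbh : Hbar.IsHomogeneous (d - 1) := by rw [hHbar]; exact bar_homog _ H hHdeg
  have hone : (1 : ℕ) + (d - 1) = d := by omega
  have hXGb0 : (X 0 * Gbar : MvPolynomial (Fin 2) ℂ) ∈ V d := by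
    have := (isHomogeneous_X ℂ (0 : Fin 2)).mul hGbh; rwa [hone] at this
  have hXGb1 : (X 1 * Gbar : MvPolynomial (Fin 2) ℂ) ∈ V d := by
    have := (isHomogeneous_X ℂ (1 : Fin 2)).mul hGbh; rwa [hone] at this
  have hXHb0 : (X 0 * Hbar : MvPolynomial (Fin 2) ℂ) ∈ V d := by
    have := (isHomogeneous_X ℂ (0 : Fin 2)).mul hHbh; rwa [hone] at this
  have hXHb1 : (X 1 * Hbar : MvPolynomial (Fin 2) ℂ) ∈ V d := by
    have := (isHomogeneous_X ℂ (1 : Fin 2)).mul hHbh; rwa [hone] at this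
  set K := (V (d - 2)).map (LinearMap.mulLeft ℂ (X 0 * X 1 : MvPolynomial (Fin 2) ℂ)) with hK
  set S := Submodule.span ℂ
      ({X 0 * Gbar, X 1 * Gbar, X 0 * Hbar, X 1 * Hbar} : Set (MvPolynomial (Fin 2) ℂ)) with hS
  -- generators in K ⊔ S
  have hmemS : ∀ q ∈ ({X 0 * Gbar, X 1 * Gbar, X 0 * Hbar, X 1 * Hbar} :
      Set (MvPolynomial (Fin 2) ℂ)), q ∈ S := fun q hq => Submodule.subset_span hq
  have hX0d : (X 0 : MvPolynomial (Fin 2) ℂ) ^ d ∈ K ⊔ S := by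
    rcases hpt1 with ha | ha
    · refine gen0 d (by omega) Gbar hXGb0 ?_ _ (le_sup_right (a := K)
        (hmemS _ (by simp))) le_sup_left
      rw [hGbar, eval_bar]; exact ha
    · refine gen0 d (by omega) Hbar hXHb0 ?_ _ (le_sup_right (a := K)
        (hmemS _ (by simp))) le_sup_left
      rw [hHbar, eval_bar]; exact ha
  have hX1d : (X 1 : MvPolynomial (Fin 2) ℂ) ^ d ∈ K ⊔ S := by
    rcases hpt2 with ha | ha
    · refine gen1 d (by omega) Gbar hXGb1 ?_ _ (le_sup_right (a := K)
        (hmemS _ (by simp))) le_sup_left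
      rw [hGbar, eval_bar]; exact ha
    · refine gen1 d (by omega) Hbar hXHb1 ?_ _ (le_sup_right (a := K)
        (hmemS _ (by simp))) le_sup_left
      rw [hHbar, eval_bar]; exact ha
  apply le_antisymm
  · refine sup_le ?_ ?_
    · rintro q ⟨r, hr, rfl⟩
      have hrh : r.IsHomogeneous (d - 2) := hr
      have := ((isHomogeneous_X ℂ (0 : Fin 2)).mul (isHomogeneous_X ℂ 1)).mul hrh
      rw [show (1 : ℕ) + 1 + (d - 2) = d by omega] at this
      rw [mul_assoc] at this
      simpa [LinearMap.mulLeft_apply] using this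
    · rw [hS, Submodule.span_le]
      rintro q hq
      simp only [Set.mem_insert_iff, Set.mem_singleton_iff] at hq
      rcases hq with rfl | rfl | rfl | rfl
      · exact hXGb0
      · exact hXGb1
      · exact hXHb0
      · exact hXHb1
  · intro p hp
    have hk := key d (by omega) p hp
    have hsplit : p = (p - (eval ![1,0] p) • (X 0 : MvPolynomial (Fin 2) ℂ) ^ d
        - (eval ![0,1] p) • X 1 ^ d) + (eval ![1,0] p) • X 0 ^ d
        + (eval ![0,1] p) • X 1 ^ d := by ring
    rw [hsplit]
    exact Submodule.add_mem _ (Submodule.add_mem _ (le_sup_left (b := S) hk)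
      (Submodule.smul_mem _ _ hX0d)) (Submodule.smul_mem _ _ hX1d)
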